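/- Let V₁ and V₂ be disjoint finite sets with |V₁| = |V₂| = m, V = V₁ ∪ V₂, and let E ⊆ V₁ × V₂ be the edge set of a bipartite graph on V. Let f : V → ℝ be a function such that f(u) + f(v) ∈ [0,1] for every edge (u,v) ∈ E. Then there exists a function g : V → ℝ such that: (a) |g(v)| ≤ m/2 for all v ∈ V; and (b) g(u) + g(v) = f(u) + f(v) for every edge (u,v) ∈ E. -/

import Mathlib

section Aux

/-- auxiliary graph on `V1`: two vertices are adjacent iff they share a common
neighbour via `E`. -/
def auxG {V : Type*} (V1 : Finset V) (E : Finset (V × V)) : SimpleGraph ↥V1 where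
  Adj a b := a ≠ b ∧ ∃ v, ((a : V), v) ∈ E ∧ ((b : V), v) ∈ E
  symm := by constructor; rintro a b ⟨hne, v, ha, hb⟩; exact ⟨hne.symm, v, hb, ha⟩
  loopless := by constructor; rintro a ⟨hne, -⟩; exact hne rfl

noncomputable def mycomp {α : Type*} [Fintype α] (G : SimpleGraph α) (a : α) : Finset α :=
  letI := Classical.decPred (G.Reachable a)
  Finset.univ.filter (G.Reachable a)

lemma mem_mycomp {α : Type*} [Fintype α] (G : SimpleGraph α) (a b : α) :
    b ∈ mycomp G a ↔ G.Reachable a b := by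
  classical
  simp [mycomp]

lemma self_mem_mycomp {α : Type*} [Fintype α] (G : SimpleGraph α) (a : α) :
    a ∈ mycomp G a := (mem_mycomp G a a).2 (SimpleGraph.Reachable.refl a)

lemma mycomp_eq {α : Type*} [Fintype α] (G : SimpleGraph α) {a b : α}
    (h : G.Reachable a b) : mycomp G a = mycomp G b := by
  ext c
  simp only [mem_mycomp]
  exact ⟨fun hc => h.symm.trans hc, fun hc => h.trans hc⟩

/-- maximum of `f` over the connected component of `a`. -/
noncomputable def myA {α : Type*} [Fintype α] (G : SimpleGraph α) (f : α → ℝ) (a : α) : ℝ :=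
  (mycomp G a).sup' ⟨a, self_mem_mycomp G a⟩ f

lemma le_myA {α : Type*} [Fintype α] (G : SimpleGraph α) (f : α → ℝ) (a : α) :
    f a ≤ myA G f a :=
  Finset.le_sup' f (self_mem_mycomp G a)

lemma myA_congr {α : Type*} [Fintype α] (G : SimpleGraph α) (f : α → ℝ) {a b : α}
    (h : G.Reachable a b) : myA G f a = myA G f b := by
  have hc := mycomp_eq G h
  unfold myA
  apply le_antisymm
  · exact Finset.sup'_le _ _ fun c hcmem => Finset.le_sup' f (hc ▸ hcmem)
  · exact Finset.sup'_le _ _ fun c hcmem => Finset.le_sup' f (hc.symm ▸ hcmem)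

lemma walk_bound {α : Type*} (G : SimpleGraph α) (f : α → ℝ)
    (hadj : ∀ a b : α, G.Adj a b → |f a - f b| ≤ 1) :
    ∀ a b : α, ∀ w : G.Walk a b, |f a - f b| ≤ w.length := by
  intro a b w
  induction w with
  | nil => simp
  | @cons a c b h p ih =>
    have h1 := hadj _ _ h
    have h3 := abs_sub_le (f a) (f c) (f b)
    simp only [SimpleGraph.Walk.length_cons, Nat.cast_add, Nat.cast_one]
    linarith

lemma reach_bound {α : Type*} [Fintype α] [DecidableEq α] (G : SimpleGraph α) (f : α → ℝ)
    (hadj : ∀ a b : α, G.Adj a b → |f a - f b| ≤ 1) {a b : α}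
    (h : G.Reachable a b) : |f a - f b| ≤ (Fintype.card α : ℝ) - 1 := by
  classical
  obtain ⟨w⟩ := h
  have hp := w.toPath.2.length_lt
  have hw := walk_bound G f hadj a b w.toPath.1
  have hcast : (w.toPath.1.length : ℝ) + 1 ≤ (Fintype.card α : ℝ) := by exact_mod_cast hp
  linarith

lemma myA_le {α : Type*} [Fintype α] [DecidableEq α] (G : SimpleGraph α) (f : α → ℝ)
    (hadj : ∀ a b : α, G.Adj a b → |f a - f b| ≤ 1) (a : α) :
    myA G f a ≤ f a + ((Fintype.card α : ℝ) - 1) := by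
  apply Finset.sup'_le
  intro c hc
  have hr : G.Reachable a c := (mem_mycomp G a c).1 hc
  have hb := abs_le.1 (reach_bound G f hadj hr.symm)
  linarith [hb.1, hb.2]

end Aux

/-- Lemma 10: shifting the values of a function on a bipartite graph so that
edge sums are preserved and all values are bounded by `m/2`. -/
theorem stmt14 (V : Type*) [Fintype V] [DecidableEq V] (m : ℕ)
    (V1 V2 : Finset V) (hdisj : Disjoint V1 V2)
    (h1 : V1.card = m) (h2 : V2.card = m)
    (hcover : V1 ∪ V2 = Finset.univ)
    (E : Finset (V × V)) (hE : ∀ e ∈ E, e.1 ∈ V1 ∧ e.2 ∈ V2)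
    (f : V → ℝ) (hf : ∀ e ∈ E, f e.1 + f e.2 ∈ Set.Icc (0 : ℝ) 1) :
    ∃ g : V → ℝ, (∀ v, |g v| ≤ (m : ℝ) / 2) ∧
      (∀ e ∈ E, g e.1 + g e.2 = f e.1 + f e.2) := by
  classical
  set G := auxG V1 E with hG
  set F : ↥V1 → ℝ := fun c => f (c : V) with hF
  have hadj : ∀ a b : ↥V1, G.Adj a b → |F a - F b| ≤ 1 := by
    rintro a b ⟨-, v, ha, hb⟩
    have hfa := hf _ ha
    have hfb := hf _ hb
    simp only [Set.mem_Icc] at hfa hfb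
    have : -1 ≤ f (a : V) - f (b : V) ∧ f (a : V) - f (b : V) ≤ 1 := by
      constructor <;> linarith
    rw [abs_le]
    exact this
  have hcard : Fintype.card ↥V1 = m := by simp [h1]
  have hupper : ∀ a : ↥V1, myA G F a ≤ F a + ((m : ℝ) - 1) := by
    intro a
    have := myA_le G F hadj a
    rwa [hcard] at this
  have hler : ∀ a : ↥V1, F a ≤ myA G F a := le_myA G F
  refine ⟨fun v => if h : v ∈ V1 then f v - myA G F ⟨v, h⟩ + m / 2
      else if h2 : ∃ u : ↥V1, ((u : V), v) ∈ E then f v + myA G F h2.choose - m / 2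
      else 0, ?_, ?_⟩
  · intro v
    dsimp only
    by_cases h : v ∈ V1
    · rw [dif_pos h]
      have hle := hler ⟨v, h⟩
      have hge := hupper ⟨v, h⟩
      simp only [hF] at hle hge
      rw [abs_le]
      constructor <;> linarith
    · rw [dif_neg h]
      by_cases h2 : ∃ u : ↥V1, ((u : V), v) ∈ E
      · rw [dif_pos h2]
        obtain he := h2.choose_spec
        have hfe := hf _ he
        simp only [Set.mem_Icc] at hfe
        have hle := hler h2.choose
        have hge := hupper h2.choose
        simp only [hF] at hle hge
        rw [abs_le]
        constructor <;> linarith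
      · rw [dif_neg h2]
        simp only [abs_zero]
        positivity
  · intro e he
    dsimp only
    obtain ⟨hu, hv⟩ := hE e he
    have hv1 : e.2 ∉ V1 := Finset.disjoint_right.1 hdisj hv
    have hex : ∃ u : ↥V1, ((u : V), e.2) ∈ E := ⟨⟨e.1, hu⟩, by simpa using he⟩
    simp only [dif_pos hu, dif_neg hv1, dif_pos hex]
    have hAeq : myA G F hex.choose = myA G F ⟨e.1, hu⟩ := by
      by_cases heq : hex.choose = (⟨e.1, hu⟩ : ↥V1)
      · rw [heq]
      · refine myA_congr G F (SimpleGraph.Adj.reachable ?_)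
        exact ⟨heq, e.2, hex.choose_spec, by simpa using he⟩
    rw [hAeq]
    ring
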